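/- Let 0 < α < 1, β > 0, t > 0, and let U : [0, ∞) → ℝ be continuous. Then (sin(απ)/π) · ∫_{−∞}^{+∞} |ϑ|^{2α−1} ( ∫_0^t e^{−(ϑ²+β)(t−s)} U(s) ds ) dϑ = (1/Γ(1−α)) · ∫_0^t (t−s)^{−α} e^{−β(t−s)} U(s) ds. -/

import Mathlib

open Real MeasureTheory intervalIntegral

lemma aux_integrable_abs_rpow_mul_exp_neg_mul_sq {b : ℝ} (hb : 0 < b) {q : ℝ} (hq : -1 < q) :
    Integrable fun x : ℝ => |x| ^ q * Real.exp (-b * x ^ 2) := by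
  have h : IntegrableOn (fun x : ℝ => |x| ^ q * Real.exp (-b * x ^ 2)) (Set.Ioi 0) := by
    refine (integrableOn_rpow_mul_exp_neg_mul_sq hb hq).congr_fun (fun x hx => ?_)
      measurableSet_Ioi
    rw [abs_of_pos hx]
  rw [← integrableOn_univ, ← Set.Iio_union_Ici (a := (0 : ℝ)), integrableOn_union,
    integrableOn_Ici_iff_integrableOn_Ioi]
  refine ⟨?_, h⟩
  rw [← (Measure.measurePreserving_neg (volume : Measure ℝ)).integrableOn_comp_preimage
      (Homeomorph.neg ℝ).measurableEmbedding]
  simpa only [Function.comp_def, abs_neg, neg_sq, Set.neg_preimage, Set.neg_Iio, neg_neg,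
    neg_zero] using h

lemma aux_gauss_moment {α : ℝ} (hq : (-1 : ℝ) < 2 * α - 1) {b : ℝ} (hb : 0 < b) :
    ∫ ϑ : ℝ, |ϑ| ^ (2 * α - 1) * Real.exp (-b * ϑ ^ 2)
      = Real.Gamma α * b ^ (-α) := by
  have hca := integral_comp_abs (f := fun x : ℝ => x ^ (2 * α - 1) * Real.exp (-b * x ^ 2))
  have h0 : ∫ ϑ : ℝ, |ϑ| ^ (2 * α - 1) * Real.exp (-b * ϑ ^ 2)
      = ∫ ϑ : ℝ, |ϑ| ^ (2 * α - 1) * Real.exp (-b * |ϑ| ^ 2) := by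
    simp_rw [sq_abs]
  rw [h0, hca]
  have h2 : ∫ x in Set.Ioi (0 : ℝ), x ^ (2 * α - 1) * Real.exp (-b * x ^ 2)
      = b ^ (-(2 * α - 1 + 1) / 2) * (1 / 2) * Real.Gamma ((2 * α - 1 + 1) / 2) := by
    simp_rw [← Real.rpow_two]
    exact integral_rpow_mul_exp_neg_mul_rpow two_pos hq hb
  rw [h2, show -(2 * α - 1 + 1) / 2 = -α by ring, show (2 * α - 1 + 1) / 2 = α by ring]
  ring

/-- Output identity of Lemma 2.3 of the paper: the diffusive realization of the
truncated fractional integral `I^{1-α,β}U`. -/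
theorem stmt_3 (α β t : ℝ) (hα0 : 0 < α) (hα1 : α < 1) (hβ : 0 < β) (ht : 0 < t)
    (U : ℝ → ℝ) (hU : ContinuousOn U (Set.Ici 0)) :
    (Real.sin (α * π) / π) *
        ∫ ϑ : ℝ, |ϑ| ^ (2 * α - 1) *
          (∫ s in (0:ℝ)..t, Real.exp (-(ϑ ^ 2 + β) * (t - s)) * U s)
      = (1 / Real.Gamma (1 - α)) *
          ∫ s in (0:ℝ)..t, (t - s) ^ (-α) * Real.exp (-β * (t - s)) * U s := by
  have hq : (-1 : ℝ) < 2 * α - 1 := by linarith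
  set ν : Measure ℝ := volume.restrict (Set.Ioc (0 : ℝ) t) with hνdef
  -- bound for U on [0, t]
  obtain ⟨M, hM⟩ : ∃ M : ℝ, ∀ s ∈ Set.Icc (0 : ℝ) t, ‖U s‖ ≤ M :=
    isCompact_Icc.exists_bound_of_continuousOn (hU.mono fun x hx => hx.1)
  have hM0 : 0 ≤ M := le_trans (norm_nonneg _) (hM 0 ⟨le_refl 0, ht.le⟩)
  -- a.e. membership in the open interval
  have hae : ∀ᵐ s ∂ν, s ∈ Set.Ioo (0 : ℝ) t := by
    have h1 : ∀ᵐ s ∂ν, s ∈ Set.Ioc (0 : ℝ) t := ae_restrict_mem measurableSet_Ioc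
    have h2 : ∀ᵐ s : ℝ, s ≠ t := by
      rw [ae_iff]
      simpa only [ne_eq, not_not, Set.setOf_eq_eq_singleton] using measure_singleton t
    have h2' : ∀ᵐ s ∂ν, s ≠ t := ae_restrict_of_ae h2
    filter_upwards [h1, h2'] with s hs hs'
    exact ⟨hs.1, lt_of_le_of_ne hs.2 hs'⟩
  have hUm : AEStronglyMeasurable U ν :=
    (hU.mono fun x hx => le_of_lt hx.1).aestronglyMeasurable measurableSet_Ioc
  -- the kernel (t-s)^(-α) is integrable on (0, t]
  have hkernel : IntegrableOn (fun s : ℝ => (t - s) ^ (-α)) (Set.Ioc 0 t) := by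
    have h1 : IntervalIntegrable (fun x : ℝ => x ^ (-α)) volume 0 t :=
      intervalIntegral.intervalIntegrable_rpow' (by linarith)
    have h2 := (h1.comp_sub_left t).symm
    rw [sub_zero, sub_self] at h2
    exact (intervalIntegrable_iff_integrableOn_Ioc_of_le ht.le).mp h2
  -- the integrand on the product space
  set f : ℝ → ℝ → ℝ :=
    fun ϑ s => |ϑ| ^ (2 * α - 1) * (Real.exp (-(ϑ ^ 2 + β) * (t - s)) * U s) with hfdef
  have hrw : ∀ s ∈ Set.Ioo (0 : ℝ) t, (fun ϑ => f ϑ s) = fun ϑ =>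
      (Real.exp (-β * (t - s)) * U s) *
        (|ϑ| ^ (2 * α - 1) * Real.exp (-(t - s) * ϑ ^ 2)) := by
    intro s _
    funext ϑ
    simp only [hfdef]
    rw [show -(ϑ ^ 2 + β) * (t - s) = -(t - s) * ϑ ^ 2 + -β * (t - s) by ring, Real.exp_add]
    ring
  -- measurability on the product
  have hFm : AEStronglyMeasurable (Function.uncurry f) (volume.prod ν) := by
    apply AEStronglyMeasurable.mul
    · exact Measurable.aestronglyMeasurable (by fun_prop)
    · apply AEStronglyMeasurable.mul
      · exact (Continuous.aestronglyMeasurable (by fun_prop :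
          Continuous fun p : ℝ × ℝ => Real.exp (-(p.1 ^ 2 + β) * (t - p.2))))
      · exact hUm.comp_snd
  -- first Fubini condition
  have hcond1 : ∀ᵐ s ∂ν, Integrable (fun ϑ => f ϑ s) volume := by
    filter_upwards [hae] with s hs
    have hts : 0 < t - s := sub_pos.mpr hs.2
    rw [hrw s hs]
    exact (aux_integrable_abs_rpow_mul_exp_neg_mul_sq hts hq).const_mul _
  -- the inner integral in ϑ, computed for each s ∈ (0, t)
  have hinner : ∀ s ∈ Set.Ioo (0 : ℝ) t,
      (∫ ϑ : ℝ, f ϑ s) = Real.Gamma α * ((t - s) ^ (-α) * Real.exp (-β * (t - s)) * U s) := by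
    intro s hs
    have hts : 0 < t - s := sub_pos.mpr hs.2
    rw [hrw s hs, MeasureTheory.integral_const_mul, aux_gauss_moment hq hts]
    ring
  -- second Fubini condition: the iterated norm integral
  have hnormval : ∀ s ∈ Set.Ioo (0 : ℝ) t,
      (∫ ϑ : ℝ, ‖f ϑ s‖)
        = Real.Gamma α * ((t - s) ^ (-α) * (Real.exp (-β * (t - s)) * ‖U s‖)) := by
    intro s hs
    have hts : 0 < t - s := sub_pos.mpr hs.2
    have : (fun ϑ : ℝ => ‖f ϑ s‖) = fun ϑ =>
        (Real.exp (-β * (t - s)) * ‖U s‖) *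
          (|ϑ| ^ (2 * α - 1) * Real.exp (-(t - s) * ϑ ^ 2)) := by
      have h := hrw s hs
      funext ϑ
      have h' : f ϑ s = (Real.exp (-β * (t - s)) * U s) *
          (|ϑ| ^ (2 * α - 1) * Real.exp (-(t - s) * ϑ ^ 2)) := by
        rw [show f ϑ s = (fun ϑ => f ϑ s) ϑ from rfl, h]
      rw [h', norm_mul, norm_mul, Real.norm_eq_abs, Real.norm_eq_abs, Real.norm_eq_abs,
        abs_of_pos (Real.exp_pos _),
        abs_of_nonneg (show (0:ℝ) ≤ |ϑ| ^ (2 * α - 1) * Real.exp (-(t - s) * ϑ ^ 2) by positivity)]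
    rw [this, MeasureTheory.integral_const_mul, aux_gauss_moment hq hts]
    ring
  have hcond2 : Integrable (fun s => ∫ ϑ : ℝ, ‖f ϑ s‖) ν := by
    have hmeas : AEStronglyMeasurable (fun s => ∫ ϑ : ℝ, ‖f ϑ s‖) ν :=
      hFm.norm.prod_swap.integral_prod_right'
    refine Integrable.mono' (hkernel.const_mul (Real.Gamma α * M)) hmeas ?_
    filter_upwards [hae] with s hs
    have hts : 0 < t - s := sub_pos.mpr hs.2
    rw [hnormval s hs]
    have hUb : ‖U s‖ ≤ M := hM s ⟨hs.1.le, hs.2.le⟩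
    have hexp : Real.exp (-β * (t - s)) ≤ 1 := by
      rw [Real.exp_le_one_iff]
      nlinarith
    have hΓ : 0 ≤ Real.Gamma α := (Real.Gamma_pos_of_pos hα0).le
    have hpow : (0 : ℝ) ≤ (t - s) ^ (-α) := Real.rpow_nonneg hts.le _
    rw [Real.norm_eq_abs, abs_of_nonneg (by positivity)]
    calc Real.Gamma α * ((t - s) ^ (-α) * (Real.exp (-β * (t - s)) * ‖U s‖))
        ≤ Real.Gamma α * ((t - s) ^ (-α) * (1 * M)) := by
          apply mul_le_mul_of_nonneg_left _ hΓ
          apply mul_le_mul_of_nonneg_left _ hpow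
          exact mul_le_mul hexp hUb (norm_nonneg _) zero_le_one
      _ = Real.Gamma α * M * (t - s) ^ (-α) := by ring
  -- Fubini
  have hFint : Integrable (Function.uncurry f) (volume.prod ν) :=
    (integrable_prod_iff' hFm).mpr ⟨hcond1, hcond2⟩
  have key : (∫ ϑ : ℝ, |ϑ| ^ (2 * α - 1) *
        (∫ s in (0:ℝ)..t, Real.exp (-(ϑ ^ 2 + β) * (t - s)) * U s))
      = Real.Gamma α * ∫ s in (0:ℝ)..t, (t - s) ^ (-α) * Real.exp (-β * (t - s)) * U s := by
    have lhs1 : (∫ ϑ : ℝ, |ϑ| ^ (2 * α - 1) *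
          (∫ s in (0:ℝ)..t, Real.exp (-(ϑ ^ 2 + β) * (t - s)) * U s))
        = ∫ ϑ : ℝ, ∫ s, f ϑ s ∂ν := by
      refine integral_congr_ae (Filter.Eventually.of_forall fun ϑ => ?_)
      show |ϑ| ^ (2 * α - 1) * (∫ s in (0:ℝ)..t, Real.exp (-(ϑ ^ 2 + β) * (t - s)) * U s)
        = ∫ s, f ϑ s ∂ν
      rw [intervalIntegral.integral_of_le ht.le, ← MeasureTheory.integral_const_mul]
    rw [lhs1, integral_integral_swap hFint, intervalIntegral.integral_of_le ht.le,
      ← MeasureTheory.integral_const_mul]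
    refine integral_congr_ae ?_
    filter_upwards [hae] with s hs
    exact hinner s hs
  rw [key, ← mul_assoc]
  congr 1
  -- reflection formula
  have hsin : 0 < Real.sin (π * α) :=
    Real.sin_pos_of_pos_of_lt_pi (by positivity) (by nlinarith [Real.pi_pos])
  have hΓ1 : 0 < Real.Gamma (1 - α) := Real.Gamma_pos_of_pos (by linarith)
  have href := Real.Gamma_mul_Gamma_one_sub α
  rw [eq_div_iff hsin.ne'] at href
  rw [mul_comm α π]
  field_simp
  linear_combination href
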